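/- Let Ω̃ = {(x,y) ∈ ℝ² : |x| ≤ 1, −1 ≤ y ≤ 0, x² + y² ≥ 1/4} ∪ {(x,y) ∈ ℝ² : y ≥ 0, 1/4 ≤ x² + y² ≤ 1}. Define Q̃ : Ω̃ → M₃(ℝ) by Q̃(x,y) = P((0,1,0)) if y ≤ 0, and Q̃(x,y) = P((−y/√(x²+y²), x/√(x²+y²), 0)) if y ≥ 0. Then Q̃ is well defined (the two formulas agree where both apply) and continuous on Ω̃, and Q̃ is not orientable: there is no continuous map n : Ω̃ → 𝕊² with Q̃(x,y) = P(n(x,y)) for all (x,y) ∈ Ω̃. -/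

import Mathlib

set_option linter.unnecessarySeqFocus false

/-- `P(n) = s (n⊗n − (1/3) Id)`. -/
noncomputable def Pmat (s : ℝ) (n : Fin 3 → ℝ) : Matrix (Fin 3) (Fin 3) ℝ :=
  s • (Matrix.vecMulVec n n - (1 / 3 : ℝ) • (1 : Matrix (Fin 3) (Fin 3) ℝ))

/-- The domain `Ω̃`: the lower rectangle `[−1,1] × [−1,0]` minus the open disc of radius
`1/2` about the origin, together with the closed upper half-annulus of radii `1/2` and `1`. -/
def OmegaTilde : Set (ℝ × ℝ) :=
  {p : ℝ × ℝ | |p.1| ≤ 1 ∧ -1 ≤ p.2 ∧ p.2 ≤ 0 ∧ 1 / 4 ≤ p.1 ^ 2 + p.2 ^ 2} ∪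
  {p : ℝ × ℝ | 0 ≤ p.2 ∧ 1 / 4 ≤ p.1 ^ 2 + p.2 ^ 2 ∧ p.1 ^ 2 + p.2 ^ 2 ≤ 1}

/-- The line field `Q̃` of Figure 1: constant vertical lines for `y ≤ 0`, tangential
lines for `y ≥ 0`. -/
noncomputable def Qtilde (s : ℝ) (p : ℝ × ℝ) : Matrix (Fin 3) (Fin 3) ℝ :=
  if p.2 ≤ 0 then Pmat s ![0, 1, 0]
  else Pmat s ![-p.2 / Real.sqrt (p.1 ^ 2 + p.2 ^ 2), p.1 / Real.sqrt (p.1 ^ 2 + p.2 ^ 2), 0]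

lemma pmat_inj {s : ℝ} (hs : s ≠ 0) {a b : Fin 3 → ℝ} (h : Pmat s a = Pmat s b)
    (i j : Fin 3) : a i * a j = b i * b j := by
  have h1 := smul_right_injective (Matrix (Fin 3) (Fin 3) ℝ) hs h
  have h2 : Matrix.vecMulVec a a = Matrix.vecMulVec b b := sub_left_injective h1
  simpa [Matrix.vecMulVec_apply] using congrFun (congrFun h2 i) j

lemma sign_const {a b : ℝ} (hab : a ≤ b) {f : ℝ → ℝ}
    (hf : ContinuousOn f (Set.Icc a b)) (h1 : ∀ t ∈ Set.Icc a b, f t ^ 2 = 1) :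
    f a = f b := by
  by_contra hne
  have ha : a ∈ Set.Icc a b := ⟨le_refl a, hab⟩
  have hb : b ∈ Set.Icc a b := ⟨hab, le_refl b⟩
  have hfa := h1 a ha
  have hfb := h1 b hb
  have hamem : f a = 1 ∨ f a = -1 := by
    rcases mul_eq_zero.1 (show (f a - 1) * (f a + 1) = 0 by nlinarith) with h | h
    · left; linarith
    · right; linarith
  have hbmem : f b = 1 ∨ f b = -1 := by
    rcases mul_eq_zero.1 (show (f b - 1) * (f b + 1) = 0 by nlinarith) with h | h
    · left; linarith
    · right; linarith
  have h0 : (0:ℝ) ∈ Set.uIcc (f a) (f b) := by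
    rcases hamem with h | h <;> rcases hbmem with h' | h' <;>
      simp [h, h'] at hne ⊢ <;> rw [Set.mem_uIcc] <;> norm_num
  have hf' : ContinuousOn f (Set.uIcc a b) := by rwa [Set.uIcc_of_le hab]
  obtain ⟨t, ht, hft⟩ := intermediate_value_uIcc hf' h0
  have := h1 t (by rwa [Set.uIcc_of_le hab] at ht)
  rw [hft] at this; norm_num at this

lemma part1 (s : ℝ) : ∀ p ∈ OmegaTilde, p.2 = 0 →
      Pmat s ![0, 1, 0] =
        Pmat s ![-p.2 / Real.sqrt (p.1 ^ 2 + p.2 ^ 2),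
                  p.1 / Real.sqrt (p.1 ^ 2 + p.2 ^ 2), 0] := by
  rintro ⟨x, y⟩ hp (hy : y = 0)
  subst hy
  have hx2 : (1/4 : ℝ) ≤ x ^ 2 := by
    rcases hp with h | h
    · simpa using h.2.2.2
    · simpa using h.2.1
  have hx : x ≠ 0 := by intro h; rw [h] at hx2; norm_num at hx2
  have hsqrt : Real.sqrt (x ^ 2 + 0 ^ 2) = |x| := by
    simp [Real.sqrt_sq_eq_abs]
  have key : x / Real.sqrt (x ^ 2) * (x / Real.sqrt (x ^ 2)) = 1 := by
    have hsqrt : Real.sqrt (x ^ 2) = |x| := Real.sqrt_sq_eq_abs x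
    rw [hsqrt, div_mul_div_comm]
    rw [show |x| * |x| = x * x by rw [← abs_mul, abs_mul_self]]
    exact div_self (by positivity)
  unfold Pmat
  congr 1
  congr 1
  ext i j
  fin_cases i <;> fin_cases j <;>
    simp [Matrix.vecMulVec_apply, key]

lemma contOn_Pmat (s : ℝ) {v : (ℝ × ℝ) → Fin 3 → ℝ} {S : Set (ℝ × ℝ)}
    (hv : ∀ i, ContinuousOn (fun p => v p i) S) :
    ContinuousOn (fun p => Pmat s (v p)) S := by
  unfold Pmat
  refine ContinuousOn.const_smul (g := fun p => Matrix.vecMulVec (v p) (v p) - (1 / 3 : ℝ) • (1 : Matrix (Fin 3) (Fin 3) ℝ)) ?_ s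
  apply ContinuousOn.sub _ continuousOn_const
  apply continuousOn_pi.2
  intro i
  apply continuousOn_pi.2
  intro j
  simp only [Matrix.vecMulVec_apply]
  exact (hv i).mul (hv j)

lemma part2 (s : ℝ) : ContinuousOn (Qtilde s) OmegaTilde := by
  unfold Qtilde
  apply ContinuousOn.if
  · intro p hp
    have hfr := hp.2
    have h1 : p ∈ closure {a : ℝ × ℝ | a.2 ≤ 0} := frontier_subset_closure hfr |>.out
    have hcl : IsClosed {a : ℝ × ℝ | a.2 ≤ 0} := isClosed_le continuous_snd continuous_const
    have hle : p.2 ≤ 0 := by rwa [hcl.closure_eq] at h1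
    have h2 : p ∈ closure {a : ℝ × ℝ | a.2 ≤ 0}ᶜ := by
      have := hfr
      rw [frontier_eq_closure_inter_closure] at this
      exact this.2
    have hge : 0 ≤ p.2 := by
      have hsub : ({a : ℝ × ℝ | a.2 ≤ 0}ᶜ : Set (ℝ × ℝ)) ⊆ {a : ℝ × ℝ | 0 ≤ a.2} := by
        intro a ha; exact le_of_lt (lt_of_not_ge (by simpa using ha))
      have := closure_minimal hsub (isClosed_le continuous_const continuous_snd) h2
      exact this
    exact part1 s p hp.1 (le_antisymm hle hge)
  · exact continuousOn_const
  · apply contOn_Pmat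
    have hsq : ContinuousOn (fun p : ℝ × ℝ => Real.sqrt (p.1 ^ 2 + p.2 ^ 2))
        (OmegaTilde ∩ closure {a : ℝ × ℝ | ¬a.2 ≤ 0}) := by fun_prop
    have hne : ∀ p ∈ OmegaTilde ∩ closure {a : ℝ × ℝ | ¬a.2 ≤ 0},
        Real.sqrt (p.1 ^ 2 + p.2 ^ 2) ≠ 0 := by
      intro p hp
      have h14 : (1/4 : ℝ) ≤ p.1 ^ 2 + p.2 ^ 2 := by
        rcases hp.1 with h | h
        · exact h.2.2.2
        · exact h.2.1
      have : (0:ℝ) < p.1 ^ 2 + p.2 ^ 2 := by linarith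
      positivity
    intro i
    fin_cases i
    · exact (ContinuousOn.neg (by fun_prop)).div hsq hne
    · exact ContinuousOn.div (by fun_prop) hsq hne
    · exact continuousOn_const

lemma part3 (s : ℝ) (hs : s ≠ 0) :
    ¬ ∃ n : ℝ × ℝ → EuclideanSpace ℝ (Fin 3),
        ContinuousOn n OmegaTilde ∧
        ∀ p ∈ OmegaTilde, ‖n p‖ = 1 ∧ Qtilde s p = Pmat s (fun i => n p i) := by
  rintro ⟨n, hcont, hn⟩
  -- lower region facts
  have lower : ∀ p ∈ OmegaTilde, p.2 ≤ 0 → (n p 1) ^ 2 = 1 := by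
    intro p hp hple
    have hq := (hn p hp).2
    rw [Qtilde, if_pos hple] at hq
    have := pmat_inj hs hq 1 1
    simpa [sq] using this.symm
  -- coordinate evaluation is continuous
  have heval : ∀ i : Fin 3, ContinuousOn (fun p => n p i) OmegaTilde := by
    intro i
    exact (EuclideanSpace.proj i).continuous.comp_continuousOn hcont
  -- membership of the rectangular path segments
  have memL : ∀ x y : ℝ, |x| ≤ 1 → -1 ≤ y → y ≤ 0 → 1/4 ≤ x^2 + y^2 →
      (x, y) ∈ OmegaTilde := fun x y h1 h2 h3 h4 => Or.inl ⟨h1, h2, h3, h4⟩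
  -- segment 1 : (1,0) to (1,-1)
  have seg1 : n (1, 0) 1 = n (1, -1) 1 := by
    have := sign_const (f := fun t => n (1, -t) 1) (a := 0) (b := 1) zero_le_one
      (ContinuousOn.comp (heval 1) (by fun_prop)
        (fun t ht => memL 1 (-t) (by norm_num) (by linarith [ht.2]) (by linarith [ht.1])
          (by nlinarith)))
      (fun t ht => lower (1, -t) (memL 1 (-t) (by norm_num) (by linarith [ht.2])
          (by linarith [ht.1]) (by nlinarith)) (by simpa using ht.1))
    simpa using this
  -- segment 2 : (1,-1) to (-1,-1)
  have seg2 : n (-1, -1) 1 = n (1, -1) 1 := by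
    have := sign_const (f := fun t => n (t, -1) 1) (a := -1) (b := 1) (by norm_num)
      (ContinuousOn.comp (heval 1) (by fun_prop)
        (fun t ht => memL t (-1) (abs_le.2 ⟨ht.1, ht.2⟩) (by norm_num) (by norm_num)
          (by nlinarith)))
      (fun t ht => lower (t, -1) (memL t (-1) (abs_le.2 ⟨ht.1, ht.2⟩) (by norm_num)
          (by norm_num) (by nlinarith)) (by norm_num))
    simpa using this
  -- segment 3 : (-1,-1) to (-1,0)
  have seg3 : n (-1, -1) 1 = n (-1, 0) 1 := by
    have := sign_const (f := fun t => n (-1, t - 1) 1) (a := 0) (b := 1) zero_le_one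
      (ContinuousOn.comp (heval 1) (by fun_prop)
        (fun t ht => memL (-1) (t - 1) (by norm_num) (by linarith [ht.1]) (by linarith [ht.2])
          (by nlinarith)))
      (fun t ht => lower (-1, t - 1) (memL (-1) (t - 1) (by norm_num) (by linarith [ht.1])
          (by linarith [ht.2]) (by nlinarith)) (by simp; linarith [ht.2]))
    simpa using this
  have chain : n (1, 0) 1 = n (-1, 0) 1 := by rw [seg1, ← seg2, seg3]
  -- the upper arc
  have memA : ∀ θ : ℝ, θ ∈ Set.Icc 0 Real.pi → (Real.cos θ, Real.sin θ) ∈ OmegaTilde := by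
    intro θ hθ
    refine Or.inr ⟨Real.sin_nonneg_of_nonneg_of_le_pi hθ.1 hθ.2, ?_, ?_⟩ <;>
      rw [show Real.cos θ ^ 2 + Real.sin θ ^ 2 = 1 from Real.cos_sq_add_sin_sq θ] <;>
      norm_num
  -- entry relations on the arc
  have arcrel : ∀ θ ∈ Set.Icc (0:ℝ) Real.pi,
      n (Real.cos θ, Real.sin θ) 0 * n (Real.cos θ, Real.sin θ) 0 = Real.sin θ ^ 2 ∧
      n (Real.cos θ, Real.sin θ) 0 * n (Real.cos θ, Real.sin θ) 1
        = -(Real.sin θ * Real.cos θ) ∧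
      n (Real.cos θ, Real.sin θ) 1 * n (Real.cos θ, Real.sin θ) 1 = Real.cos θ ^ 2 := by
    intro θ hθ
    have hp := memA θ hθ
    have hq := (hn _ hp).2
    by_cases hsin : Real.sin θ ≤ 0
    · have hsin0 : Real.sin θ = 0 :=
        le_antisymm hsin (Real.sin_nonneg_of_nonneg_of_le_pi hθ.1 hθ.2)
      rw [Qtilde, if_pos (by simpa using hsin)] at hq
      have h00 := pmat_inj hs hq 0 0
      have h01 := pmat_inj hs hq 0 1
      have h11 := pmat_inj hs hq 1 1
      have hcos : Real.cos θ ^ 2 = 1 := by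
        have := Real.cos_sq_add_sin_sq θ
        rw [hsin0] at this; simpa using this
      simp only [Matrix.cons_val_zero, Matrix.cons_val_one, Matrix.head_cons] at h00 h01 h11
      refine ⟨by rw [← h00]; simp [hsin0], by rw [← h01]; simp [hsin0], by rw [← h11, hcos]; norm_num⟩
    · rw [Qtilde, if_neg (by simpa using hsin)] at hq
      rw [show Real.cos θ ^ 2 + Real.sin θ ^ 2 = 1 from Real.cos_sq_add_sin_sq θ,
        Real.sqrt_one] at hq
      have h00 := pmat_inj hs hq 0 0
      have h01 := pmat_inj hs hq 0 1
      have h11 := pmat_inj hs hq 1 1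
      simp only [Matrix.cons_val_zero, Matrix.cons_val_one, Matrix.head_cons, div_one] at h00 h01 h11
      exact ⟨by rw [← h00]; ring, by rw [← h01]; ring, by rw [← h11]; ring⟩
  -- the sign function along the arc
  set h : ℝ → ℝ := fun θ => -(Real.sin θ) * n (Real.cos θ, Real.sin θ) 0
      + Real.cos θ * n (Real.cos θ, Real.sin θ) 1 with hdef
  have harc : h 0 = h Real.pi := by
    apply sign_const Real.pi_pos.le
    · apply ContinuousOn.add
      · exact ContinuousOn.mul (by fun_prop)
          (ContinuousOn.comp (heval 0) (by fun_prop) (fun θ hθ => memA θ hθ))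
      · exact ContinuousOn.mul (by fun_prop)
          (ContinuousOn.comp (heval 1) (by fun_prop) (fun θ hθ => memA θ hθ))
    · intro θ hθ
      obtain ⟨h00, h01, h11⟩ := arcrel θ hθ
      have hpyth := Real.sin_sq_add_cos_sq θ
      simp only [hdef]
      nlinarith [h00, h01, h11, hpyth]
  have h0val : h 0 = n (1, 0) 1 := by simp [hdef]
  have hpival : h Real.pi = -(n (-1, 0) 1) := by simp [hdef]
  have hmem10 : ((1:ℝ), (0:ℝ)) ∈ OmegaTilde := memL 1 0 (by norm_num) (by norm_num)
    (by norm_num) (by norm_num)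
  have hsq10 : (n (1, 0) 1) ^ 2 = 1 := lower (1, 0) hmem10 (by norm_num)
  rw [h0val, hpival, chain] at harc
  nlinarith [hsq10, chain, harc]

/-- `Q̃` is well defined (the two defining formulas agree where both apply),
continuous on `Ω̃`, and not orientable: no continuous unit vector field `n` on `Ω̃`
satisfies `Q̃ = P(n)` there. -/
theorem stmt13 (s : ℝ) (hs : s ≠ 0) (hs' : s ∈ Set.Icc (-(1 / 2) : ℝ) 1) :
    (∀ p ∈ OmegaTilde, p.2 = 0 →
      Pmat s ![0, 1, 0] =
        Pmat s ![-p.2 / Real.sqrt (p.1 ^ 2 + p.2 ^ 2),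
                  p.1 / Real.sqrt (p.1 ^ 2 + p.2 ^ 2), 0]) ∧
    ContinuousOn (Qtilde s) OmegaTilde ∧
    ¬ ∃ n : ℝ × ℝ → EuclideanSpace ℝ (Fin 3),
        ContinuousOn n OmegaTilde ∧
        ∀ p ∈ OmegaTilde, ‖n p‖ = 1 ∧ Qtilde s p = Pmat s (fun i => n p i) := by
  exact ⟨part1 s, part2 s, part3 s hs⟩
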